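/- Let f ∈ ℤ[t] be a polynomial of degree d ≥ 2 with nonzero discriminant, which has at least one real root and at least one non-real root. Set c₂ = (2/δ)^{d−1} where δ is the minimal distance between two distinct roots, and c₁ = (1/c₂)·min{|Im(ξ)| : ξ a non-real root of f}. Then for every real t with |f(t)| < c₁, there exists a real root ξ of f with |t − ξ| ≤ c₂|f(t)|. -/

import Mathlib

open Polynomial

/-- If f ∈ ℤ[t] has degree d ≥ 2, nonzero discriminant, at least one real root and
at least one non-real root, c₂ = (2/δ)^(d−1) with δ the minimal distance between
distinct roots, and c₁ = (1/c₂)·min{|Im ξ| : ξ non-real root}, then for every real t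
with |f(t)| < c₁ there is a real root ξ with |t − ξ| ≤ c₂·|f(t)|. -/
theorem stmt_2 (f : Polynomial ℤ) (d : ℕ) (hd : 2 ≤ d) (hdeg : f.natDegree = d)
    (a₀ : ℤ) (ha₀ : 1 ≤ a₀) (hlead : f.leadingCoeff = a₀)
    (ξ : Fin d → ℂ) (hinj : Function.Injective ξ)
    (hfact : f.map (Int.castRingHom ℂ) =
      Polynomial.C (a₀ : ℂ) * ∏ j : Fin d, (Polynomial.X - Polynomial.C (ξ j)))
    (hreal : ∃ j : Fin d, (ξ j).im = 0) (hnonreal : ∃ j : Fin d, (ξ j).im ≠ 0)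
    (δ : ℝ) (hδpos : 0 < δ)
    (hδ : IsLeast {r : ℝ | ∃ i j : Fin d, i ≠ j ∧ r = ‖ξ i - ξ j‖} δ)
    (c₁ c₂ m : ℝ) (hc₂ : c₂ = (2 / δ) ^ (d - 1))
    (hm : IsLeast {r : ℝ | ∃ j : Fin d, (ξ j).im ≠ 0 ∧ r = |(ξ j).im|} m)
    (hc₁ : c₁ = (1 / c₂) * m) :
    ∀ t : ℝ, ‖Polynomial.aeval (t : ℂ) f‖ < c₁ →
      ∃ j : Fin d, (ξ j).im = 0 ∧
        ‖(t : ℂ) - ξ j‖ ≤ c₂ * ‖Polynomial.aeval (t : ℂ) f‖ := by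
  intro t ht
  set F := ‖Polynomial.aeval (t : ℂ) f‖ with hF
  -- product formula
  have hprod : F = ‖(a₀ : ℂ)‖ * ∏ i : Fin d, ‖(t:ℂ) - ξ i‖ := by
    have h1 : Polynomial.aeval (t:ℂ) f = (a₀:ℂ) * ∏ i : Fin d, ((t:ℂ) - ξ i) := by
      rw [Polynomial.aeval_def, ← Polynomial.eval_map]
      have : Int.castRingHom ℂ = algebraMap ℤ ℂ := rfl
      rw [← this, hfact]
      simp [Polynomial.eval_prod]
    rw [hF, h1, norm_mul, norm_prod]
  have ha₀R : (1:ℝ) ≤ ‖(a₀ : ℂ)‖ := by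
    rw [Complex.norm_intCast]
    exact_mod_cast le_trans ha₀ (le_abs_self a₀)
  have hFge : ∏ i : Fin d, ‖(t:ℂ) - ξ i‖ ≤ F := by
    rw [hprod]
    nlinarith [Finset.prod_nonneg (fun i (_ : i ∈ Finset.univ) =>
      norm_nonneg ((t:ℂ) - ξ i))]
  -- pick minimizing root
  obtain ⟨j, -, hj⟩ := Finset.exists_min_image Finset.univ
    (fun i => ‖(t:ℂ) - ξ i‖) ⟨⟨0, by omega⟩, Finset.mem_univ _⟩
  -- other roots bounded below by δ/2
  have hother : ∀ i ∈ Finset.univ.erase j, δ/2 ≤ ‖(t:ℂ) - ξ i‖ := by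
    intro i hi
    have hij : i ≠ j := Finset.ne_of_mem_erase hi
    have hδle : δ ≤ ‖ξ i - ξ j‖ := hδ.2 ⟨i, j, hij, rfl⟩
    have htri : ‖ξ i - ξ j‖ ≤
        ‖(t:ℂ) - ξ i‖ + ‖(t:ℂ) - ξ j‖ := by
      have := norm_sub_le_norm_sub_add_norm_sub (ξ i) ((t:ℂ)) (ξ j)
      have h2 : ‖ξ i - (t:ℂ)‖ = ‖(t:ℂ) - ξ i‖ := by
        rw [norm_sub_rev]
      linarith [this, h2.le, h2.ge]
    have hmin := hj j (Finset.mem_univ j)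
    have hmin' := hj i (Finset.mem_univ i)
    change ‖(t:ℂ) - ξ j‖ ≤ ‖(t:ℂ) - ξ i‖ at hmin'
    linarith
  have hcard : (Finset.univ.erase j).card = d - 1 := by
    rw [Finset.card_erase_of_mem (Finset.mem_univ j)]
    simp
  have hkey : ‖(t:ℂ) - ξ j‖ * (δ/2)^(d-1) ≤ F := by
    have h1 : ‖(t:ℂ) - ξ j‖ * ∏ i ∈ Finset.univ.erase j,
        ‖(t:ℂ) - ξ i‖ = ∏ i : Fin d, ‖(t:ℂ) - ξ i‖ :=
      Finset.mul_prod_erase Finset.univ (fun i => ‖(t:ℂ) - ξ i‖) (Finset.mem_univ j)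
    have h2 : (δ/2)^(d-1) ≤ ∏ i ∈ Finset.univ.erase j, ‖(t:ℂ) - ξ i‖ := by
      rw [← hcard, ← Finset.prod_const]
      exact Finset.prod_le_prod (fun i _ => by positivity) hother
    calc ‖(t:ℂ) - ξ j‖ * (δ/2)^(d-1)
        ≤ ‖(t:ℂ) - ξ j‖ * ∏ i ∈ Finset.univ.erase j,
            ‖(t:ℂ) - ξ i‖ := by
          apply mul_le_mul_of_nonneg_left h2 (norm_nonneg _)
      _ = ∏ i : Fin d, ‖(t:ℂ) - ξ i‖ := h1
      _ ≤ F := hFge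
  have hc₂pos : 0 < c₂ := by rw [hc₂]; positivity
  have hinv : 1 / c₂ = (δ/2)^(d-1) := by
    rw [hc₂, one_div, ← inv_pow, inv_div]
  -- j is real
  have hjreal : (ξ j).im = 0 := by
    by_contra him
    have hmle : m ≤ |(ξ j).im| := hm.2 ⟨j, him, rfl⟩
    have habs : |(ξ j).im| ≤ ‖(t:ℂ) - ξ j‖ := by
      have := Complex.abs_im_le_norm ((t:ℂ) - ξ j)
      simpa using this
    have : c₁ ≤ F := by
      rw [hc₁, hinv]
      calc (δ/2)^(d-1) * m ≤ (δ/2)^(d-1) * ‖(t:ℂ) - ξ j‖ := by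
            apply mul_le_mul_of_nonneg_left (le_trans hmle habs) (by positivity)
        _ ≤ F := by rw [mul_comm]; exact hkey
    linarith
  refine ⟨j, hjreal, ?_⟩
  rw [← hinv] at hkey
  calc ‖(t:ℂ) - ξ j‖ = c₂ * (‖(t:ℂ) - ξ j‖ * (1/c₂)) := by
        field_simp
    _ ≤ c₂ * F := mul_le_mul_of_nonneg_left hkey hc₂pos.le
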